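/- arXiv:1411.4957 — 2 statements merged into one kernel-verified Lean document; each statement's English description precedes it below -/
import Mathlib

section
/- Let k, r be natural numbers, let 𝒢 be a k-complex with e_k(𝒢) ≥ (r-1)·e_{k-1}(𝒢) + 1, fix 0 ≤ j ≤ k-1, and suppose e is an edge of 𝒢^(j) which lies in fewer than (k-j)·r edges of 𝒢^(j+1). Let 𝒢' be the k-complex obtained from 𝒢 by deleting e and every edge of 𝒢 containing e. Then e_k(𝒢') ≥ (r-1)·e_{k-1}(𝒢') + 1. -/
open Finset

variable {V : Type*} [DecidableEq V]

/-- The number of edges of cardinality `j` of a hypergraph. -/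
def ecount (G : Finset (Finset V)) (j : ℕ) : ℕ := (G.filter fun e => e.card = j).card

/-- Let `𝒢` be a `k`-complex with `e_k(𝒢) ≥ (r-1)·e_{k-1}(𝒢) + 1`, and
let `e` be a `j`-edge of `𝒢` (with `0 ≤ j ≤ k-1`) lying in fewer than `(k-j)·r` edges of
`𝒢^(j+1)`. Then the `k`-complex `𝒢'` obtained by deleting `e` and every edge containing it
satisfies `e_k(𝒢') ≥ (r-1)·e_{k-1}(𝒢') + 1`. -/
theorem delete_low_degree (k r j : ℕ) (hj : j + 1 ≤ k) (𝒢 : Finset (Finset V))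
    (hdown : ∀ e ∈ 𝒢, ∀ f, f ⊆ e → f ∈ 𝒢)
    (hbound : ∀ e ∈ 𝒢, e.card ≤ k)
    (hcount : (r - 1) * ecount 𝒢 (k - 1) + 1 ≤ ecount 𝒢 k)
    (e : Finset V) (he : e ∈ 𝒢) (hecard : e.card = j)
    (hdeg : (𝒢.filter fun f => f.card = j + 1 ∧ e ⊆ f).card < (k - j) * r) :
    (r - 1) * ecount (𝒢.filter fun f => ¬ e ⊆ f) (k - 1) + 1 ≤
      ecount (𝒢.filter fun f => ¬ e ⊆ f) k := by
  classical
  obtain ⟨r, rfl⟩ : ∃ r', r = r' + 1 := by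
    cases r with
    | zero => simp at hdeg
    | succ r => exact ⟨r, rfl⟩
  simp only [Nat.add_sub_cancel] at hcount ⊢
  set N := 𝒢.filter (fun f => f.card = j + 1 ∧ e ⊆ f) with hNdef
  set A := 𝒢.filter (fun f => f.card = k ∧ e ⊆ f) with hAdef
  set B := 𝒢.filter (fun f => f.card = k - 1 ∧ e ⊆ f) with hBdef
  have hkj : 0 < k - j := by omega
  -- every k-edge containing e has at least (k-j) subsets in B
  have h1a : ∀ f ∈ A, k - j ≤ (B.filter fun g => g ⊆ f).card := by
    intro f hf
    rw [hAdef, mem_filter] at hf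
    obtain ⟨hfG, hfk, hef⟩ := hf
    have : (f \ e).card ≤ (B.filter fun g => g ⊆ f).card := by
      apply Finset.card_le_card_of_injOn (fun x => f.erase x)
      · intro x hx
        rw [mem_coe, mem_sdiff] at hx
        rw [mem_coe, mem_filter, hBdef, mem_filter]
        refine ⟨⟨hdown f hfG _ (erase_subset _ _), ?_, ?_⟩, erase_subset _ _⟩
        · rw [card_erase_of_mem hx.1, hfk]
        · exact subset_erase.2 ⟨hef, hx.2⟩
      · intro x hx y hy hxy
        have hxy' : f.erase x = f.erase y := hxy
        rw [mem_coe, mem_sdiff] at hx hy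
        by_contra hne
        have hmem : x ∈ f.erase y := mem_erase.2 ⟨hne, hx.1⟩
        rw [← hxy'] at hmem
        exact (mem_erase.1 hmem).1 rfl
    rwa [card_sdiff_of_subset hef, hfk, hecard] at this
  -- every (k-1)-edge containing e is contained in at most (k-j)*r k-edges containing e
  have h1b : ∀ g ∈ B, (A.filter fun f => g ⊆ f).card ≤ (k - j) * r := by
    intro g hg
    rw [hBdef, mem_filter] at hg
    obtain ⟨hgG, hgk, heg⟩ := hg
    set M := (g \ e).image (fun x => insert x e) with hMdef
    have hMN : M ⊆ N := by
      intro m hm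
      rw [hMdef, mem_image] at hm
      obtain ⟨x, hx, rfl⟩ := hm
      rw [mem_sdiff] at hx
      rw [hNdef, mem_filter]
      refine ⟨hdown g hgG _ (insert_subset hx.1 heg), ?_, subset_insert _ _⟩
      rw [card_insert_of_notMem hx.2, hecard]
    have hMcard : M.card = k - 1 - j := by
      rw [hMdef, Finset.card_image_of_injOn, card_sdiff_of_subset heg, hgk, hecard]
      intro x hx y hy hxy
      have hxy' : insert x e = insert y e := hxy
      rw [mem_coe, mem_sdiff] at hx hy
      have hx' : x ∈ insert y e := hxy' ▸ mem_insert_self x e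
      rcases mem_insert.1 hx' with h | h
      · exact h
      · exact absurd h hx.2
    have hone : ∀ f ∈ A.filter fun f => g ⊆ f, ∃ x, f \ g = {x} ∧ x ∈ f ∧ x ∉ g := by
      intro f hf
      rw [mem_filter, hAdef, mem_filter] at hf
      obtain ⟨⟨hfG, hfk, hef⟩, hgf⟩ := hf
      obtain ⟨x, hxeq⟩ : ∃ x, f \ g = {x} := by
        rw [← card_eq_one, card_sdiff_of_subset hgf, hfk, hgk]; omega
      have hx : x ∈ f \ g := hxeq ▸ mem_singleton_self x
      rw [mem_sdiff] at hx
      exact ⟨x, hxeq, hx.1, hx.2⟩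
    have hinj : ((A.filter fun f => g ⊆ f)).card ≤ (N \ M).card := by
      apply Finset.card_le_card_of_injOn (fun f => e ∪ (f \ g))
      · intro f hf
        obtain ⟨x, hxeq, hxf, hxg⟩ := hone f hf
        rw [mem_coe, mem_filter, hAdef, mem_filter] at hf
        obtain ⟨⟨hfG, hfk, hef⟩, hgf⟩ := hf
        have hxe : x ∉ e := fun h => hxg (heg h)
        have hux : e ∪ {x} = insert x e := by rw [union_comm]; exact (insert_eq x e).symm
        rw [mem_coe, mem_sdiff]
        beta_reduce
        constructor
        · rw [hNdef, mem_filter]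
          refine ⟨hdown f hfG _ (union_subset hef sdiff_subset), ?_, subset_union_left⟩
          rw [hxeq, hux, card_insert_of_notMem hxe, hecard]
        · rw [hMdef, mem_image]
          rintro ⟨y, hy, hye⟩
          rw [mem_sdiff] at hy
          rw [hxeq, hux] at hye
          have hxy : x = y := by
            have hmem : x ∈ insert y e := hye ▸ mem_insert_self x e
            rcases mem_insert.1 hmem with h | h
            · exact h
            · exact absurd h hxe
          exact hxg (hxy ▸ hy.1)
      · intro f1 hf1 f2 hf2 heq
        have heq' : e ∪ (f1 \ g) = e ∪ (f2 \ g) := heq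
        simp only [mem_coe] at hf1 hf2
        obtain ⟨x1, hx1eq, hx1f, hx1g⟩ := hone f1 hf1
        obtain ⟨x2, hx2eq, hx2f, hx2g⟩ := hone f2 hf2
        rw [mem_filter] at hf1 hf2
        have hx1e : x1 ∉ e := fun h => hx1g (heg h)
        rw [hx1eq, hx2eq, union_comm e {x1}, union_comm e {x2},
          ← insert_eq, ← insert_eq] at heq'
        have hx12 : x1 = x2 := by
          have hmem : x1 ∈ insert x2 e := heq' ▸ mem_insert_self x1 e
          rcases mem_insert.1 hmem with h | h
          · exact h
          · exact absurd h hx1e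
        have e1 : f1 = g ∪ {x1} := by
          rw [← hx1eq]; exact (union_sdiff_of_subset hf1.2).symm
        have e2 : f2 = g ∪ {x2} := by
          rw [← hx2eq]; exact (union_sdiff_of_subset hf2.2).symm
        rw [e1, e2, hx12]
    have hsd : (N \ M).card = N.card - M.card := card_sdiff_of_subset hMN
    have hMle : M.card ≤ N.card := card_le_card hMN
    rw [Nat.mul_succ] at hdeg
    generalize hD : (k - j) * r = D at *
    omega
  -- double counting
  have key : A.card * (k - j) ≤ (k - j) * r * B.card := by
    calc A.card * (k - j) = ∑ _f ∈ A, (k - j) := by rw [sum_const, smul_eq_mul]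
      _ ≤ ∑ f ∈ A, (B.filter fun g => g ⊆ f).card := Finset.sum_le_sum h1a
      _ = ∑ g ∈ B, (A.filter fun f => g ⊆ f).card := by
          simp_rw [Finset.card_filter]
          exact Finset.sum_comm
      _ ≤ ∑ _g ∈ B, (k - j) * r := Finset.sum_le_sum h1b
      _ = (k - j) * r * B.card := by rw [sum_const, smul_eq_mul, mul_comm]
  have hAB : A.card ≤ r * B.card := by
    have h : A.card * (k - j) ≤ r * B.card * (k - j) := by
      calc A.card * (k - j) ≤ (k - j) * r * B.card := key
        _ = r * B.card * (k - j) := by ring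
    exact Nat.le_of_mul_le_mul_right h hkj
  -- splitting ecounts
  have hsplit : ∀ t, (𝒢.filter fun f => f.card = t ∧ e ⊆ f).card
      + ecount (𝒢.filter fun f => ¬ e ⊆ f) t = ecount 𝒢 t := by
    intro t
    unfold ecount
    rw [filter_filter]
    have h := Finset.card_filter_add_card_filter_not
      (s := 𝒢.filter fun f => f.card = t) (p := fun f => e ⊆ f)
    rw [filter_filter, filter_filter] at h
    have hcomm : (𝒢.filter fun a => ¬ e ⊆ a ∧ a.card = t)
        = (𝒢.filter fun a => a.card = t ∧ ¬ e ⊆ a) := by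
      apply filter_congr
      intro f _
      constructor
      · exact fun hh => ⟨hh.2, hh.1⟩
      · exact fun hh => ⟨hh.2, hh.1⟩
    rw [hcomm]
    exact h
  have hkA : A.card + ecount (𝒢.filter fun f => ¬ e ⊆ f) k = ecount 𝒢 k := hsplit k
  have hk1B : B.card + ecount (𝒢.filter fun f => ¬ e ⊆ f) (k - 1) = ecount 𝒢 (k - 1) :=
    hsplit (k - 1)
  rw [← hkA, ← hk1B, mul_add] at hcount
  generalize hP : r * B.card = P at *
  generalize hQ : r * ecount (𝒢.filter fun f => ¬ e ⊆ f) (k - 1) = Q at *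
  omega
end

section
/- Let k, r be natural numbers and let 𝒢 be a k-complex satisfying e_k(𝒢) ≥ (r-1)·e_{k-1}(𝒢) + 1. Then 𝒢 has at least kr vertices. -/
open Finset

variable {V : Type*} [DecidableEq V]

/-- A `k`-complex `𝒢` with `e_k(𝒢) ≥ (r-1)·e_{k-1}(𝒢) + 1` in which every
vertex lies in some edge has at least `k·r` vertices. -/
theorem vertex_lower_bound [Fintype V] (k r : ℕ) (𝒢 : Finset (Finset V))
    (hdown : ∀ e ∈ 𝒢, ∀ f, f ⊆ e → f ∈ 𝒢)
    (hbound : ∀ e ∈ 𝒢, e.card ≤ k)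
    (hcover : ∀ v : V, ∃ e ∈ 𝒢, v ∈ e)
    (hcount : (r - 1) * ecount 𝒢 (k - 1) + 1 ≤ ecount 𝒢 k) :
    k * r ≤ Fintype.card V := by
  rcases Nat.eq_zero_or_pos k with hk | hk
  · simp [hk]
  rcases Nat.eq_zero_or_pos r with hr | hr
  · simp [hr]
  set n := Fintype.card V with hn
  set A := 𝒢.filter (fun e => e.card = k) with hA
  set B := 𝒢.filter (fun e => e.card = k - 1) with hB
  have hcount' : (r - 1) * B.card + 1 ≤ A.card := hcount
  -- there is a k-edge
  have hApos : 0 < A.card := lt_of_lt_of_le (Nat.succ_pos _) hcount'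
  obtain ⟨e0, he0⟩ := Finset.card_pos.mp hApos
  have he0G : e0 ∈ 𝒢 := (Finset.mem_filter.mp he0).1
  have he0c : e0.card = k := (Finset.mem_filter.mp he0).2
  have hnk : k ≤ n := he0c ▸ Finset.card_le_univ e0
  -- there is a (k-1)-edge
  obtain ⟨f0, hf0sub, hf0c⟩ := Finset.exists_subset_card_eq
    (show k - 1 ≤ e0.card by omega)
  have hm : 1 ≤ B.card := by
    apply Finset.card_pos.mpr
    exact ⟨f0, Finset.mem_filter.mpr ⟨hdown e0 he0G f0 hf0sub, hf0c⟩⟩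
  -- each k-edge contains exactly k edges of size k-1
  have lem1 : ∀ e ∈ A, (B.filter (fun f => f ⊆ e)).card = k := by
    intro e he
    have heG := (Finset.mem_filter.mp he).1
    have hec := (Finset.mem_filter.mp he).2
    have hEq : B.filter (fun f => f ⊆ e) = e.powersetCard (k - 1) := by
      ext f
      simp only [hB, Finset.mem_filter, Finset.mem_powersetCard]
      constructor
      · rintro ⟨⟨_, hfc⟩, hfe⟩; exact ⟨hfe, hfc⟩
      · rintro ⟨hfe, hfc⟩; exact ⟨⟨hdown e heG f hfe, hfc⟩, hfe⟩
    rw [hEq, Finset.card_powersetCard, hec]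
    have hk' : k = (k - 1) + 1 := by omega
    rw [hk']
    simp [Nat.choose_succ_self_right]
  -- each (k-1)-edge lies in at most n - (k-1) many k-edges
  have lem2 : ∀ f ∈ B, (A.filter (fun e => f ⊆ e)).card ≤ n - (k - 1) := by
    intro f hf
    have hfc : f.card = k - 1 := (Finset.mem_filter.mp hf).2
    have hcard : ((Finset.univ \ f).powersetCard 1).card = n - (k - 1) := by
      rw [Finset.card_powersetCard, Finset.card_sdiff_of_subset (Finset.subset_univ f),
        Finset.card_univ, hfc, Nat.choose_one_right]
    calc (A.filter (fun e => f ⊆ e)).card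
        ≤ ((Finset.univ \ f).powersetCard 1).card := by
          apply Finset.card_le_card_of_injOn (fun e => e \ f)
          · intro e he
            have he' := Finset.mem_filter.mp he
            have hec : e.card = k := (Finset.mem_filter.mp he'.1).2
            rw [Finset.mem_coe, Finset.mem_powersetCard]
            constructor
            · exact Finset.sdiff_subset_sdiff (Finset.subset_univ e) (Finset.Subset.refl f)
            · rw [Finset.card_sdiff_of_subset he'.2, hec, hfc]; omega
          · intro e1 h1 e2 h2 heq
            have h1' := (Finset.mem_filter.mp h1).2
            have h2' := (Finset.mem_filter.mp h2).2
            have := Finset.union_sdiff_of_subset h1'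
            have := Finset.union_sdiff_of_subset h2'
            simp only at heq
            calc e1 = f ∪ e1 \ f := (Finset.union_sdiff_of_subset h1').symm
              _ = f ∪ e2 \ f := by rw [heq]
              _ = e2 := Finset.union_sdiff_of_subset h2'
      _ = n - (k - 1) := hcard
  -- double counting
  have hdc : k * A.card ≤ B.card * (n - (k - 1)) := by
    calc k * A.card = ∑ _e ∈ A, k := by rw [Finset.sum_const, smul_eq_mul, mul_comm]
      _ = ∑ e ∈ A, (B.filter (fun f => f ⊆ e)).card :=
          (Finset.sum_congr rfl fun e he => (lem1 e he).symm)
      _ = ∑ e ∈ A, ∑ f ∈ B, if f ⊆ e then 1 else 0 := by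
          refine Finset.sum_congr rfl fun e _ => ?_
          rw [Finset.card_filter]
      _ = ∑ f ∈ B, ∑ e ∈ A, if f ⊆ e then 1 else 0 := Finset.sum_comm
      _ = ∑ f ∈ B, (A.filter (fun e => f ⊆ e)).card := by
          refine Finset.sum_congr rfl fun f _ => ?_
          rw [Finset.card_filter]
      _ ≤ ∑ _f ∈ B, (n - (k - 1)) := Finset.sum_le_sum lem2
      _ = B.card * (n - (k - 1)) := by rw [Finset.sum_const, smul_eq_mul]
  -- arithmetic conclusion
  obtain ⟨r', rfl⟩ : ∃ r', r = r' + 1 := ⟨r - 1, by omega⟩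
  simp only [Nat.add_sub_cancel] at hcount'
  set m := B.card with hmdef
  by_contra hcon
  push_neg at hcon
  have h1 : k * (r' * m + 1) ≤ m * (n - (k - 1)) :=
    le_trans (Nat.mul_le_mul_left k hcount') hdc
  have h2 : n - (k - 1) ≤ k * r' := by
    have : n + 1 ≤ k * r' + k := by
      have := hcon
      rw [Nat.mul_succ] at this
      omega
    omega
  have h3 : m * (n - (k - 1)) ≤ m * (k * r') := Nat.mul_le_mul_left m h2
  have h4 : k * (r' * m + 1) ≤ m * (k * r') := le_trans h1 h3
  have h5 : k * (r' * m) + k ≤ k * (r' * m) := by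
    calc k * (r' * m) + k = k * (r' * m + 1) := by ring
      _ ≤ m * (k * r') := h4
      _ = k * (r' * m) := by ring
  omega
end
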